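/- For every odd n = 2m+1 with n ≥ 5, the symmetric quartic form L_{2m+1}(x) = m(m+1)·Σ_{i<j}(x_i−x_j)⁴ − (Σ_{i<j}(x_i−x_j)²)² is not a sum of squares of real quadratic forms. -/

import Mathlib

open Finset MvPolynomial


lemma double_Ioi {n : ℕ} (g : Fin n → Fin n → ℝ) (hsym : ∀ i j, g i j = g j i)
    (hdiag : ∀ i, g i i = 0) :
    2 * ∑ i, ∑ j ∈ Ioi i, g i j = ∑ i, ∑ j, g i j := by
  have h := Finset.sum_sum_Ioi_add_eq_sum_sum_off_diag g
  have h1 : ∑ i, ∑ j ∈ Ioi i, (g j i + g i j) = 2 * ∑ i, ∑ j ∈ Ioi i, g i j := by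
    rw [Finset.mul_sum]
    refine Finset.sum_congr rfl fun i _ => ?_
    rw [Finset.mul_sum]
    exact Finset.sum_congr rfl fun j _ => by rw [hsym]; ring
  rw [h1] at h
  rw [h]
  refine Eq.trans (Finset.sum_congr rfl fun i _ => ?_) Finset.sum_comm
  apply Finset.sum_subset (Finset.subset_univ _)
  intro j _ hj
  have hji : j = i := by simpa using hj
  rw [hji, hdiag]

noncomputable def chi {n : ℕ} (S : Finset (Fin n)) : Fin n → ℝ := fun i => if i ∈ S then 1 else 0

lemma chi_sum {n : ℕ} (S : Finset (Fin n)) : ∑ i, chi S i = S.card := by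
  simp [chi, Finset.sum_ite_mem]

lemma chi_sq {n : ℕ} (S : Finset (Fin n)) (i : Fin n) : chi S i ^ 2 = chi S i := by
  by_cases h : i ∈ S <;> simp [chi, h]

lemma chi_pairsum {n : ℕ} (S : Finset (Fin n)) :
    ∑ i, ∑ j ∈ Ioi i, (chi S i - chi S j) ^ 2 =
      (S.card : ℝ) * (n - S.card) := by
  have h := double_Ioi (fun i j => (chi S i - chi S j) ^ 2)
    (fun i j => by ring) (fun i => by ring)
  have hfull : ∑ i, ∑ j, (chi S i - chi S j) ^ 2
      = 2 * ((n : ℝ) * S.card) - 2 * (S.card : ℝ) ^ 2 := by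
    have : ∀ i j : Fin n, (chi S i - chi S j) ^ 2
        = chi S i ^ 2 - 2 * (chi S i * chi S j) + chi S j ^ 2 := fun i j => by ring
    simp_rw [this, Finset.sum_add_distrib, Finset.sum_sub_distrib, ← Finset.mul_sum,
      ← Finset.sum_mul, chi_sq, chi_sum, Finset.sum_const, Finset.card_univ, Fintype.card_fin,
      nsmul_eq_mul]
    rw [← Finset.mul_sum, chi_sum]
    ring
  have h2 : (2:ℝ) * ∑ i, ∑ j ∈ Ioi i, (chi S i - chi S j) ^ 2
      = 2 * ((S.card : ℝ) * (n - S.card)) := by rw [h, hfull]; ring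
  linarith

lemma chi_four {n : ℕ} (S : Finset (Fin n)) (i j : Fin n) :
    (chi S i - chi S j) ^ 4 = (chi S i - chi S j) ^ 2 := by
  by_cases h1 : i ∈ S <;> by_cases h2 : j ∈ S <;> simp [chi, h1, h2] <;> ring



lemma eval_L (m : ℕ) (S : Finset (Fin (2 * m + 1))) :
    eval (chi S) ((C (m * (m + 1) : ℝ)) *
          (∑ i : Fin (2 * m + 1), ∑ j ∈ Ioi i, (X i - X j) ^ 4) -
        (∑ i : Fin (2 * m + 1), ∑ j ∈ Ioi i, (X i - X j) ^ 2) ^ 2)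
    = (m * (m + 1) : ℝ) * ((S.card : ℝ) * ((2 * m + 1 : ℕ) - S.card)) -
        ((S.card : ℝ) * ((2 * m + 1 : ℕ) - S.card)) ^ 2 := by
  simp only [map_sub, map_mul, map_pow, map_sum, eval_C, eval_X]
  simp_rw [chi_four S]
  rw [chi_pairsum]


lemma degree_single_two {n : ℕ} (i : Fin n) : (Finsupp.single i 2 : Fin n →₀ ℕ).degree = 2 := by
  rw [Finsupp.degree_apply, Finsupp.support_single_ne_zero i (by norm_num)]
  simp

lemma pair_support {n : ℕ} {i j : Fin n} (h : i ≠ j) :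
    (Finsupp.single i 1 + Finsupp.single j 1 : Fin n →₀ ℕ).support = {i, j} := by
  rw [Finsupp.support_add_eq (by
    simp [Finsupp.support_single_ne_zero i one_ne_zero,
      Finsupp.support_single_ne_zero j one_ne_zero, h, h.symm]),
    Finsupp.support_single_ne_zero i one_ne_zero,
    Finsupp.support_single_ne_zero j one_ne_zero]
  rfl

lemma degree_pair {n : ℕ} {i j : Fin n} (h : i ≠ j) :
    (Finsupp.single i 1 + Finsupp.single j 1 : Fin n →₀ ℕ).degree = 2 := by
  rw [Finsupp.degree_apply, pair_support h, Finset.sum_insert (by simp [h]), Finset.sum_singleton]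
  simp [Finsupp.single_apply, h, h.symm]

lemma sum_two_classify {n : ℕ} (d : Fin n →₀ ℕ) (hd : d.degree = 2) :
    (∃ i, d = Finsupp.single i 2) ∨
      ∃ i j, i < j ∧ d = Finsupp.single i 1 + Finsupp.single j 1 := by
  have hcard : Multiset.card d.toMultiset = 2 := by
    rw [Finsupp.card_toMultiset]; exact hd
  obtain ⟨a, b, hab⟩ := Multiset.card_eq_two.mp hcard
  have hd2 : d = Finsupp.single a 1 + Finsupp.single b 1 := by
    have h0 := Multiset.toFinsupp_toMultiset (({a, b} : Multiset (Fin n)))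
    have h1 : d = Multiset.toFinsupp ({a, b} : Multiset (Fin n)) := by
      rw [← hab, Finsupp.toMultiset_toFinsupp]
    rw [h1, show ({a, b} : Multiset (Fin n)) = {a} + {b} from rfl, map_add,
      Multiset.toFinsupp_singleton, Multiset.toFinsupp_singleton]
  rcases lt_trichotomy a b with h | h | h
  · exact Or.inr ⟨a, b, h, hd2⟩
  · refine Or.inl ⟨a, ?_⟩
    rw [hd2, ← h, ← Finsupp.single_add]
  · exact Or.inr ⟨b, a, h, by rw [hd2, add_comm]⟩

lemma single_ne_pair {n : ℕ} (i i' j' : Fin n) (h : i' ≠ j') :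
    (Finsupp.single i 2 : Fin n →₀ ℕ) ≠ Finsupp.single i' 1 + Finsupp.single j' 1 := by
  intro h0
  have h1 := DFunLike.congr_fun h0 i'
  simp only [Finsupp.single_apply, Finsupp.add_apply] at h1
  split_ifs at h1 <;> simp_all

lemma pair_inj {n : ℕ} {i j i' j' : Fin n} (hij : i < j) (h' : i' < j')
    (h : (Finsupp.single i 1 + Finsupp.single j 1 : Fin n →₀ ℕ)
        = Finsupp.single i' 1 + Finsupp.single j' 1) :
    i = i' ∧ j = j' := by
  have hs : ({i, j} : Finset (Fin n)) = {i', j'} := by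
    rw [← pair_support hij.ne, ← pair_support h'.ne, h]
  have hi : i = i' ∨ i = j' := by
    have : i ∈ ({i', j'} : Finset (Fin n)) := hs ▸ (by simp)
    simpa using this
  have hj : j = i' ∨ j = j' := by
    have : j ∈ ({i', j'} : Finset (Fin n)) := hs ▸ (by simp)
    simpa using this
  have hi' : i' = i ∨ i' = j := by
    have : i' ∈ ({i, j} : Finset (Fin n)) := hs ▸ (by simp)
    simpa using this
  have hv1 : (i : ℕ) < j := hij
  have hv2 : (i' : ℕ) < j' := h'
  have e1 : (i : ℕ) = i' ∨ (i : ℕ) = j' := by rcases hi with h | h <;> simp [h]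
  have e2 : (j : ℕ) = i' ∨ (j : ℕ) = j' := by rcases hj with h | h <;> simp [h]
  have e3 : (i' : ℕ) = i ∨ (i' : ℕ) = j := by rcases hi' with h | h <;> simp [h]
  exact ⟨Fin.ext (by omega), Fin.ext (by omega)⟩



lemma quad_rep {n : ℕ} (q : MvPolynomial (Fin n) ℝ) (hq : q.IsHomogeneous 2) :
    q = (∑ i, (monomial (Finsupp.single i 2)) (coeff (Finsupp.single i 2) q))
      + ∑ i, ∑ j ∈ Ioi i, (monomial (Finsupp.single i 1 + Finsupp.single j 1))
          (coeff (Finsupp.single i 1 + Finsupp.single j 1) q) := by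
  ext d
  rw [coeff_add, coeff_sum]
  simp_rw [coeff_sum, coeff_monomial]
  by_cases hd : d.degree = 2
  · rcases sum_two_classify d hd with ⟨i, rfl⟩ | ⟨i, j, hij, rfl⟩
    · rw [Finset.sum_eq_single i]
      · rw [if_pos rfl]
        have : ∀ i' : Fin n, ∑ j' ∈ Ioi i',
            (if Finsupp.single i' 1 + Finsupp.single j' 1 = Finsupp.single i 2
              then coeff (Finsupp.single i' 1 + Finsupp.single j' 1) q else 0) = 0 := by
          intro i'
          apply Finset.sum_eq_zero
          intro j' hj'
          rw [if_neg]
          exact fun hcon => single_ne_pair i i' j' (mem_Ioi.mp hj').ne hcon.symm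
        rw [Finset.sum_congr rfl fun i' _ => this i', Finset.sum_const, smul_zero, add_zero]
      · intro i' _ hne
        rw [if_neg (fun hcon => hne ((Finsupp.single_left_inj (by norm_num)).mp hcon))]
      · intro habs; exact absurd (Finset.mem_univ i) habs
    · have h1 : ∀ i' : Fin n,
          (if Finsupp.single i' 2 = Finsupp.single i 1 + Finsupp.single j 1
            then coeff (Finsupp.single i' 2) q else 0) = 0 := by
        intro i'
        rw [if_neg (single_ne_pair i' i j hij.ne)]
      rw [Finset.sum_congr rfl fun i' _ => h1 i', Finset.sum_const, smul_zero, zero_add]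
      rw [Finset.sum_eq_single i]
      · rw [Finset.sum_eq_single j]
        · rw [if_pos rfl]
        · intro j' hj' hne
          rw [if_neg (fun hcon => hne (pair_inj (mem_Ioi.mp hj') hij hcon).2)]
        · intro habs; exact absurd (mem_Ioi.mpr hij) habs
      · intro i' _ hne
        apply Finset.sum_eq_zero
        intro j' hj'
        rw [if_neg (fun hcon => hne (pair_inj (mem_Ioi.mp hj') hij hcon).1)]
      · intro habs; exact absurd (Finset.mem_univ i) habs
  · rw [hq.coeff_eq_zero hd]
    rw [Finset.sum_congr rfl (fun i' _ => if_neg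
      (fun hcon : Finsupp.single i' 2 = d => hd (hcon ▸ degree_single_two i'))),
      Finset.sum_const, smul_zero, zero_add]
    symm
    apply Finset.sum_eq_zero
    intro i' _
    apply Finset.sum_eq_zero
    intro j' hj'
    exact if_neg (fun hcon => hd (by rw [← hcon]; exact degree_pair (mem_Ioi.mp hj').ne))





lemma eval_monomial_single {n : ℕ} (x : Fin n → ℝ) (i : Fin n) (c : ℝ) :
    eval x ((monomial (Finsupp.single i 2)) c) = c * x i ^ 2 := by
  rw [eval_monomial, Finsupp.prod_single_index (h := fun a e => x a ^ e) (pow_zero _)]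

lemma eval_monomial_pair {n : ℕ} (x : Fin n → ℝ) (i j : Fin n) (hij : i ≠ j) (c : ℝ) :
    eval x ((monomial (Finsupp.single i 1 + Finsupp.single j 1)) c) = c * (x i * x j) := by
  rw [eval_monomial, Finsupp.prod_add_index (fun a _ => pow_zero _) (fun a _ b c => pow_add _ _ _),
    Finsupp.prod_single_index (h := fun a e => x a ^ e) (pow_zero _),
    Finsupp.prod_single_index (h := fun a e => x a ^ e) (pow_zero _), pow_one, pow_one]

lemma quad_eval {n : ℕ} (q : MvPolynomial (Fin n) ℝ) (hq : q.IsHomogeneous 2) (x : Fin n → ℝ) :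
    eval x q = ∑ i, coeff (Finsupp.single i 2) q * x i ^ 2
      + ∑ i, ∑ j ∈ Ioi i, coeff (Finsupp.single i 1 + Finsupp.single j 1) q * (x i * x j) := by
  conv_lhs => rw [quad_rep q hq]
  rw [map_add, map_sum, map_sum]
  congr 1
  · exact Finset.sum_congr rfl fun i _ => eval_monomial_single x i _
  · refine Finset.sum_congr rfl fun i _ => ?_
    rw [map_sum]
    exact Finset.sum_congr rfl fun j hj => eval_monomial_pair x i j (mem_Ioi.mp hj).ne _





lemma quad_eval_chi {n : ℕ} (q : MvPolynomial (Fin n) ℝ) (hq : q.IsHomogeneous 2)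
    (S : Finset (Fin n)) :
    eval (chi S) q = ∑ i ∈ S, coeff (Finsupp.single i 2) q
      + ∑ i ∈ S, ∑ j ∈ S,
        (if i < j then coeff (Finsupp.single i 1 + Finsupp.single j 1) q else 0) := by
  classical
  rw [quad_eval q hq]
  congr 1
  · have h : ∀ i, coeff (Finsupp.single i 2) q * chi S i ^ 2
        = if i ∈ S then coeff (Finsupp.single i 2) q else 0 := by
      intro i; by_cases h : i ∈ S <;> simp [chi, h]
    rw [Finset.sum_congr rfl fun i _ => h i, Finset.sum_ite_mem, Finset.univ_inter]
  · have h1 : ∀ i : Fin n, ∑ j ∈ Ioi i,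
        coeff (Finsupp.single i 1 + Finsupp.single j 1) q * (chi S i * chi S j)
        = ∑ j, (if i < j then coeff (Finsupp.single i 1 + Finsupp.single j 1) q else 0)
            * (chi S i * chi S j) := by
      intro i
      rw [Finset.sum_congr rfl (fun j hj => by
        rw [if_pos (mem_Ioi.mp hj)] :
          ∀ j ∈ Ioi i, coeff (Finsupp.single i 1 + Finsupp.single j 1) q * (chi S i * chi S j)
            = (if i < j then coeff (Finsupp.single i 1 + Finsupp.single j 1) q else 0)
              * (chi S i * chi S j))]
      exact Finset.sum_subset (Finset.subset_univ _)
        (fun j _ hj => by rw [if_neg (fun hc => hj (mem_Ioi.mpr hc)), zero_mul])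
    rw [Finset.sum_congr rfl fun i _ => h1 i]
    have h2 : ∀ i j : Fin n,
        (if i < j then coeff (Finsupp.single i 1 + Finsupp.single j 1) q else 0)
          * (chi S i * chi S j)
        = if i ∈ S then (if j ∈ S then
            (if i < j then coeff (Finsupp.single i 1 + Finsupp.single j 1) q else 0) else 0)
          else 0 := by
      intro i j
      by_cases hi : i ∈ S <;> by_cases hj : j ∈ S <;> simp [chi, hi, hj]
    rw [Finset.sum_congr rfl fun i _ => Finset.sum_congr rfl fun j _ => h2 i j]
    have h3 : ∀ i : Fin n, ∑ j, (if i ∈ S then (if j ∈ S then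
        (if i < j then coeff (Finsupp.single i 1 + Finsupp.single j 1) q else 0) else 0) else 0)
        = if i ∈ S then ∑ j ∈ S,
            (if i < j then coeff (Finsupp.single i 1 + Finsupp.single j 1) q else 0) else 0 := by
      intro i
      by_cases hi : i ∈ S <;> simp [hi, Finset.sum_ite_mem, Finset.univ_inter]
    rw [Finset.sum_congr rfl fun i _ => h3 i, Finset.sum_ite_mem, Finset.univ_inter]


lemma Efun_vanish (m : ℕ) (hm : 2 ≤ m) (a : Fin (2*m+1) → ℝ)
    (c : Fin (2*m+1) → Fin (2*m+1) → ℝ)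
    (hcdiag : ∀ i j : Fin (2*m+1), ¬ i < j → c i j = 0)
    (hE0 : ∀ S : Finset (Fin (2*m+1)), S.card = m ∨ S.card = m+1 →
      ∑ i ∈ S, a i + ∑ i ∈ S, ∑ j ∈ S, c i j = 0) :
    (∀ i, a i = 0) ∧ (∀ i j, c i j = 0) := by
  have hncard : Fintype.card (Fin (2*m+1)) = 2*m+1 := Fintype.card_fin _
  set bt : Fin (2*m+1) → Fin (2*m+1) → ℝ := fun i j => c i j + c j i with hbt
  have btsymm : ∀ u v, bt u v = bt v u := fun u v => add_comm _ _
  have hinsert : ∀ (u : Fin (2*m+1)) (S : Finset (Fin (2*m+1))), u ∉ S →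
      (∑ i ∈ insert u S, a i + ∑ i ∈ insert u S, ∑ j ∈ insert u S, c i j)
        = (∑ i ∈ S, a i + ∑ i ∈ S, ∑ j ∈ S, c i j) + a u + ∑ i ∈ S, bt u i := by
    intro u S hu
    rw [Finset.sum_insert hu, Finset.sum_insert hu, Finset.sum_insert hu]
    simp_rw [Finset.sum_insert hu]
    rw [Finset.sum_add_distrib, hcdiag u u (lt_irrefl u)]
    simp only [hbt]
    rw [Finset.sum_add_distrib]
    ring
  have D1 : ∀ (u : Fin (2*m+1)) (S : Finset (Fin (2*m+1))), u ∉ S → S.card = m →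
      a u + ∑ i ∈ S, bt u i = 0 := by
    intro u S hu hS
    have h1 := hE0 (insert u S) (Or.inr (by rw [Finset.card_insert_of_notMem hu, hS]))
    have h2 := hE0 S (Or.inl hS)
    rw [hinsert u S hu, h2] at h1
    linarith
  have D2 : ∀ u v w : Fin (2*m+1), u ≠ v → u ≠ w → v ≠ w → bt u v = bt u w := by
    intro u v w huv huw hvw
    have hcard3 : ({u, v, w} : Finset (Fin (2*m+1))).card = 3 := by
      rw [Finset.card_insert_of_notMem (by simp [huv, huw]),
        Finset.card_insert_of_notMem (by simp [hvw]), Finset.card_singleton]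
    obtain ⟨T, hTsub, hTcard⟩ := Finset.exists_subset_card_eq
      (s := (univ \ {u, v, w} : Finset (Fin (2*m+1)))) (n := m - 1)
      (by rw [Finset.card_sdiff_of_subset (Finset.subset_univ _), Finset.card_univ, hncard, hcard3]; omega)
    have hmem : ∀ x ∈ T, x ≠ u ∧ x ≠ v ∧ x ≠ w := by
      intro x hx
      have := hTsub hx
      simp only [Finset.mem_sdiff, Finset.mem_univ, true_and, Finset.mem_insert,
        Finset.mem_singleton] at this
      tauto
    have huT : u ∉ T := fun h => (hmem u h).1 rfl
    have hvT : v ∉ T := fun h => (hmem v h).2.1 rfl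
    have hwT : w ∉ T := fun h => (hmem w h).2.2 rfl
    have h1 := D1 u (insert v T) (by simp [huv, huT])
      (by rw [Finset.card_insert_of_notMem hvT, hTcard]; omega)
    have h2 := D1 u (insert w T) (by simp [huw, huT])
      (by rw [Finset.card_insert_of_notMem hwT, hTcard]; omega)
    rw [Finset.sum_insert hvT] at h1
    rw [Finset.sum_insert hwT] at h2
    linarith
  have D3 : ∀ u v u' v' : Fin (2*m+1), u ≠ v → u' ≠ v' → bt u v = bt u' v' := by
    intro u v u' v' huv h'
    have hle4 : ({u, v, u', v'} : Finset (Fin (2*m+1))).card ≤ 4 := by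
      have h1 := Finset.card_insert_le u ({v, u', v'} : Finset (Fin (2*m+1)))
      have h2 := Finset.card_insert_le v ({u', v'} : Finset (Fin (2*m+1)))
      have h3 := Finset.card_insert_le u' ({v'} : Finset (Fin (2*m+1)))
      simp only [Finset.card_singleton] at *
      omega
    have hne : (univ \ ({u, v, u', v'} : Finset (Fin (2*m+1)))).Nonempty := by
      rw [← Finset.card_pos, Finset.card_sdiff_of_subset (Finset.subset_univ _), Finset.card_univ, hncard]
      omega
    obtain ⟨z, hz⟩ := hne
    simp only [Finset.mem_sdiff, Finset.mem_univ, true_and, Finset.mem_insert,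
      Finset.mem_singleton] at hz
    push_neg at hz
    obtain ⟨hzu, hzv, hzu', hzv'⟩ := hz
    have e1 : bt u v = bt u z := D2 u v z huv (Ne.symm hzu) (Ne.symm hzv)
    have e3 : bt z u = bt z u' := by
      by_cases h : u = u'
      · rw [h]
      · exact D2 z u u' hzu hzu' h
    have e5 : bt u' z = bt u' v' := D2 u' z v' (Ne.symm hzu') h' hzv'
    rw [e1, btsymm u z, e3, btsymm z u', e5]
  have hz01 : (⟨0, by omega⟩ : Fin (2*m+1)) ≠ ⟨1, by omega⟩ := by simp [Fin.ext_iff]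
  set cc : ℝ := bt ⟨0, by omega⟩ ⟨1, by omega⟩ with hcc
  have hbtc : ∀ u v : Fin (2*m+1), u ≠ v → bt u v = cc := fun u v h => D3 u v _ _ h hz01
  have hcform : ∀ i j : Fin (2*m+1), c i j = if i < j then cc else 0 := by
    intro i j
    by_cases h : i < j
    · rw [if_pos h, ← hbtc i j h.ne]
      simp only [hbt]
      rw [hcdiag j i (not_lt_of_gt h), add_zero]
    · rw [if_neg h, hcdiag i j h]
  have hac : ∀ u : Fin (2*m+1), a u = -(m * cc) := by
    intro u
    obtain ⟨S, hSsub, hScard⟩ := Finset.exists_subset_card_eq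
      (s := (univ \ {u} : Finset (Fin (2*m+1)))) (n := m)
      (by rw [Finset.card_sdiff_of_subset (Finset.subset_univ _), Finset.card_univ, hncard,
        Finset.card_singleton]; omega)
    have huS : u ∉ S := fun h => by
      have := hSsub h; simp at this
    have h1 := D1 u S huS hScard
    have h2 : ∑ i ∈ S, bt u i = m * cc := by
      rw [Finset.sum_congr rfl (fun i hi => hbtc u i (fun he => huS (he ▸ hi))),
        Finset.sum_const, hScard, nsmul_eq_mul]
    rw [h2] at h1
    linarith
  have hcc0 : cc = 0 := by
    obtain ⟨S, _, hScard⟩ := Finset.exists_subset_card_eq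
      (s := (univ : Finset (Fin (2*m+1)))) (n := m)
      (by rw [Finset.card_univ, hncard]; omega)
    have h0 := hE0 S (Or.inl hScard)
    have h1 : ∑ i ∈ S, a i = m * (-(m * cc)) := by
      rw [Finset.sum_congr rfl (fun i _ => hac i), Finset.sum_const, hScard, nsmul_eq_mul]
    have hP : ∀ i j : Fin (2*m+1), (if i < j then (1:ℝ) else 0) + (if j < i then 1 else 0)
        + (if i = j then 1 else 0) = 1 := by
      intro i j
      rcases lt_trichotomy i j with h | h | h
      · rw [if_pos h, if_neg (not_lt_of_gt h), if_neg h.ne]; ring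
      · rw [if_neg (h ▸ lt_irrefl i), if_neg (h ▸ lt_irrefl i), if_pos h]; ring
      · rw [if_neg (not_lt_of_gt h), if_pos h, if_neg (ne_of_gt h)]; ring
    set P : ℝ := ∑ i ∈ S, ∑ j ∈ S, (if i < j then (1:ℝ) else 0) with hPdef
    have hswap : ∑ i ∈ S, ∑ j ∈ S, (if j < i then (1:ℝ) else 0) = P := by
      rw [hPdef]; exact Finset.sum_comm
    have hdiagS : ∑ i ∈ S, ∑ j ∈ S, (if i = j then (1:ℝ) else 0) = m := by
      rw [Finset.sum_congr rfl (fun i hi => by rw [Finset.sum_ite_eq S i (fun _ => (1:ℝ)), if_pos hi])]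
      rw [Finset.sum_const, hScard, nsmul_eq_mul, mul_one]
    have htot : P + P + (m:ℝ) = m * m := by
      have hsum1 : ∑ i ∈ S, ∑ j ∈ S, (1:ℝ) = (m:ℝ) * m := by
        simp [Finset.sum_const, hScard, mul_comm]
      have hbig : ∑ i ∈ S, ∑ j ∈ S, ((if i < j then (1:ℝ) else 0) + (if j < i then 1 else 0)
          + (if i = j then 1 else 0)) = (m:ℝ) * m := by
        rw [Finset.sum_congr rfl (fun i _ => Finset.sum_congr rfl (fun j _ => hP i j))]
        exact hsum1
      simp_rw [Finset.sum_add_distrib] at hbig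
      rw [hswap, hdiagS, ← hPdef] at hbig
      linarith
    have h2 : ∑ i ∈ S, ∑ j ∈ S, c i j = cc * P := by
      rw [hPdef, Finset.mul_sum]
      refine Finset.sum_congr rfl fun i _ => ?_
      rw [Finset.mul_sum]
      refine Finset.sum_congr rfl fun j _ => ?_
      rw [hcform i j]
      split_ifs <;> ring
    rw [h1, h2] at h0
    have hmr : (2:ℝ) ≤ (m:ℝ) := by exact_mod_cast hm
    have : cc * ((m:ℝ) * m + m) = 0 := by nlinarith
    have hpos : (m:ℝ) * m + m > 0 := by nlinarith
    rcases mul_eq_zero.mp this with h | h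
    · exact h
    · linarith
  constructor
  · intro i; rw [hac i, hcc0]; ring
  · intro i j; rw [hcform i j, hcc0]; split_ifs <;> rfl







lemma quad_vanish (m : ℕ) (hm : 2 ≤ m) (q : MvPolynomial (Fin (2*m+1)) ℝ)
    (hq : q.IsHomogeneous 2)
    (hv : ∀ S : Finset (Fin (2*m+1)), S.card = m ∨ S.card = m+1 → eval (chi S) q = 0) :
    q = 0 := by
  classical
  obtain ⟨ha0, hc0⟩ := Efun_vanish m hm
    (fun i => coeff (Finsupp.single i 2) q)
    (fun i j => if i < j then coeff (Finsupp.single i 1 + Finsupp.single j 1) q else 0)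
    (fun i j h => if_neg h)
    (fun S hS => by rw [← quad_eval_chi q hq S]; exact hv S hS)
  rw [quad_rep q hq]
  have hs1 : (∑ i, (monomial (Finsupp.single i 2)) (coeff (Finsupp.single i 2) q))
      = (0 : MvPolynomial (Fin (2*m+1)) ℝ) :=
    Finset.sum_eq_zero fun i _ => by rw [ha0 i, map_zero]
  rw [hs1, zero_add]
  apply Finset.sum_eq_zero
  intro i _
  apply Finset.sum_eq_zero
  intro j hj
  have := hc0 i j
  rw [if_pos (mem_Ioi.mp hj)] at this
  rw [this, map_zero]






/-- For odd `n = 2m+1 ≥ 5`, the symmetric quartic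
`L_{2m+1} = m(m+1)·∑_{i<j}(Xᵢ−Xⱼ)⁴ − (∑_{i<j}(Xᵢ−Xⱼ)²)²` is not a sum of squares of
real quadratic forms. -/
theorem stmt9 (m : ℕ) (hm : 2 ≤ m) :
    ¬ ∃ (k : ℕ) (h : Fin k → MvPolynomial (Fin (2 * m + 1)) ℝ),
      (∀ t, (h t).IsHomogeneous 2) ∧
      (C (m * (m + 1) : ℝ)) *
          (∑ i : Fin (2 * m + 1), ∑ j ∈ Ioi i, (X i - X j) ^ 4) -
        (∑ i : Fin (2 * m + 1), ∑ j ∈ Ioi i, (X i - X j) ^ 2) ^ 2 =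
      ∑ t, (h t) ^ 2 := by
  rintro ⟨k, h, hhom, heq⟩
  have hvanish : ∀ S : Finset (Fin (2 * m + 1)), S.card = m ∨ S.card = m + 1 →
      ∀ t, eval (chi S) (h t) = 0 := by
    intro S hS t
    have h1 : eval (chi S) ((C (m * (m + 1) : ℝ)) *
          (∑ i : Fin (2 * m + 1), ∑ j ∈ Ioi i, (X i - X j) ^ 4) -
        (∑ i : Fin (2 * m + 1), ∑ j ∈ Ioi i, (X i - X j) ^ 2) ^ 2)
        = ∑ t, (eval (chi S) (h t)) ^ 2 := by
      rw [heq, map_sum]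
      exact Finset.sum_congr rfl fun t _ => map_pow _ _ _
    have h2 : eval (chi S) ((C (m * (m + 1) : ℝ)) *
          (∑ i : Fin (2 * m + 1), ∑ j ∈ Ioi i, (X i - X j) ^ 4) -
        (∑ i : Fin (2 * m + 1), ∑ j ∈ Ioi i, (X i - X j) ^ 2) ^ 2) = 0 := by
      rw [eval_L m S]
      have hcast : ((S.card : ℝ)) * ((2 * m + 1 : ℕ) - S.card) = (m : ℝ) * (m + 1) := by
        rcases hS with hc | hc <;> rw [hc] <;> push_cast <;> ring
      rw [hcast]; ring
    have h3 : ∑ t, (eval (chi S) (h t)) ^ 2 = 0 := by rw [← h1, h2]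
    have h4 := (Finset.sum_eq_zero_iff_of_nonneg (fun t _ => sq_nonneg _)).mp h3 t (mem_univ t)
    exact pow_eq_zero_iff (by norm_num) |>.mp h4
  have ht0 : ∀ t, h t = 0 := fun t =>
    quad_vanish m hm (h t) (hhom t) (fun S hS => hvanish S hS t)
  have hL0 : (C (m * (m + 1) : ℝ)) *
        (∑ i : Fin (2 * m + 1), ∑ j ∈ Ioi i, (X i - X j) ^ 4) -
      (∑ i : Fin (2 * m + 1), ∑ j ∈ Ioi i, (X i - X j) ^ 2) ^ 2 = 0 := by
    rw [heq]
    exact Finset.sum_eq_zero fun t _ => by rw [ht0 t]; ring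
  have hev := eval_L m ({⟨0, by omega⟩} : Finset (Fin (2 * m + 1)))
  rw [hL0, map_zero] at hev
  rw [Finset.card_singleton] at hev
  have hmr : (2 : ℝ) ≤ (m : ℝ) := by exact_mod_cast hm
  push_cast at hev
  nlinarith [hev, hmr]
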